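/- Under the assumptions of the NRMH construction (Γ skew-symmetric with zero row sums, Γ(x,y) ≥ −π(y)Q(y,x), Q(x,y)=0 ⟺ Q(y,x)=0, π everywhere positive), the NRMH kernel P satisfies π(x)P(x,y) − π(y)P(y,x) = Γ(x,y) for all x ≠ y. In particular, P is π-reversible if and only if Γ = 0. -/

import Mathlib

/-- the NRMH kernel satisfies π(x)P(x,y) − π(y)P(y,x) = Γ(x,y) for
x ≠ y; in particular P is π-reversible iff Γ = 0. -/
theorem nrmh_vorticity_identity {S : Type*} [Fintype S] [DecidableEq S]
    (pi : S → ℝ) (Q Γ : S → S → ℝ) (P : Matrix S S ℝ)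
    (hpipos : ∀ x, 0 < pi x) (hpisum : ∑ x, pi x = 1)
    (hQnn : ∀ x y, 0 ≤ Q x y) (hQrow : ∀ x, ∑ y, Q x y = 1)
    (hQsym : ∀ x y, Q x y = 0 ↔ Q y x = 0)
    (hΓskew : ∀ x y, Γ x y = - Γ y x)
    (hΓrow : ∀ x, ∑ y, Γ x y = 0)
    (hΓlb : ∀ x y, -(pi y * Q y x) ≤ Γ x y)
    (hP1 : ∀ x y, x ≠ y → pi x * Q x y ≠ 0 →
      P x y = Q x y * min 1 ((Γ x y + pi y * Q y x) / (pi x * Q x y)))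
    (hP2 : ∀ x y, x ≠ y → pi x * Q x y = 0 → P x y = Q x y)
    (hPdiag : ∀ x, P x x = 1 - ∑ y ∈ Finset.univ.filter (· ≠ x), P x y) :
    (∀ x y, x ≠ y → pi x * P x y - pi y * P y x = Γ x y) ∧
      ((∀ x y, pi x * P x y = pi y * P y x) ↔ (∀ x y, Γ x y = 0)) := by
  have key : ∀ x y, x ≠ y → pi x * P x y - pi y * P y x = Γ x y := by
    intro x y hxy
    by_cases hQ : Q x y = 0
    · have hQ' : Q y x = 0 := (hQsym x y).mp hQ
      have h1 : P x y = 0 := by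
        rw [hP2 x y hxy (by rw [hQ]; ring)]; exact hQ
      have h2 : P y x = 0 := by
        rw [hP2 y x hxy.symm (by rw [hQ']; ring)]; exact hQ'
      have hg1 : 0 ≤ Γ x y := by have := hΓlb x y; rw [hQ'] at this; simpa using this
      have hg2 : 0 ≤ Γ y x := by have := hΓlb y x; rw [hQ] at this; simpa using this
      have hΓ0 : Γ x y = 0 := le_antisymm (by rw [hΓskew x y]; linarith) hg1
      rw [h1, h2, hΓ0]; ring
    · have hQ' : Q y x ≠ 0 := fun h => hQ ((hQsym x y).mpr h)
      set a := pi x * Q x y with ha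
      set b := pi y * Q y x with hb
      have hapos : 0 < a := mul_pos (hpipos x) (lt_of_le_of_ne (hQnn x y) (Ne.symm hQ))
      have hbpos : 0 < b := mul_pos (hpipos y) (lt_of_le_of_ne (hQnn y x) (Ne.symm hQ'))
      have e1 : pi x * P x y = min a (Γ x y + b) := by
        rw [hP1 x y hxy (ne_of_gt hapos), ← mul_assoc, ← ha,
          mul_min_of_nonneg _ _ hapos.le, mul_one,
          mul_div_cancel₀ _ (ne_of_gt hapos)]
      have e2 : pi y * P y x = min b (a - Γ x y) := by
        rw [hP1 y x hxy.symm (ne_of_gt hbpos), ← mul_assoc, ← hb,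
          mul_min_of_nonneg _ _ hbpos.le, mul_one,
          mul_div_cancel₀ _ (ne_of_gt hbpos), hΓskew y x]
        ring_nf
        rw [← ha]
      have hga : Γ x y ≤ a := by
        have := hΓlb y x; rw [hΓskew y x] at this; linarith
      rw [e1, e2]
      rcases le_total (Γ x y + b) a with h | h
      · rw [min_eq_right h, min_eq_left (by linarith)]; ring
      · rw [min_eq_left h, min_eq_right (by linarith)]; ring
  refine ⟨key, ?_, ?_⟩
  · intro hrev x y
    by_cases hxy : x = y
    · subst hxy
      have := hΓskew x x; linarith
    · have := key x y hxy
      rw [hrev x y] at this; linarith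
  · intro hΓ0 x y
    by_cases hxy : x = y
    · subst hxy; rfl
    · have := key x y hxy
      rw [hΓ0 x y] at this; linarith
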